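/- Let H ∈ ℂ^{3×3} be the Hermitian matrix in block form H = [[H₁, v], [vᴴ, h]], where H₁ ∈ ℂ^{2×2} is Hermitian with two distinct eigenvalues, v ∈ ℂ², and h ∈ ℝ. Suppose σ ∈ ℝ is an eigenvalue of H of multiplicity at least 2 that is the smallest eigenvalue of H (i.e., the two smallest of the three eigenvalues of H, counted with multiplicity, both equal σ). Then σ is the smallest eigenvalue of H₁, and every eigenvector e ∈ ℂ² of H₁ with H₁e = σe is orthogonal to v (i.e., vᴴe = 0). -/

import Mathlib

open Matrix

lemma rayleigh_lower {n : Type*} [Fintype n] [DecidableEq n] {A : Matrix n n ℂ}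
    (hA : A.IsHermitian) (σ : ℝ) (hσ : ∀ i, σ ≤ hA.eigenvalues i) (y : n → ℂ) :
    σ * Complex.re (star y ⬝ᵥ y) ≤ Complex.re (star y ⬝ᵥ (A *ᵥ y)) := by
  set U : Matrix n n ℂ := (hA.eigenvectorUnitary : Matrix n n ℂ) with hU
  set w : n → ℂ := star U *ᵥ y with hw
  have hsw : star w = star y ᵥ* U := by
    rw [hw, star_mulVec, star_eq_conjTranspose, conjTranspose_conjTranspose]
  have key : star y ⬝ᵥ (A *ᵥ y)
      = star w ⬝ᵥ (diagonal (Complex.ofReal ∘ hA.eigenvalues) *ᵥ w) := by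
    conv_lhs => rw [hA.spectral_theorem, Unitary.conjStarAlgAut_apply]
    rw [← mulVec_mulVec, ← mulVec_mulVec, dotProduct_mulVec, ← hsw, hw]
    rfl
  have hnorm : star w ⬝ᵥ w = star y ⬝ᵥ y := by
    rw [hsw, hw, dotProduct_mulVec, vecMul_vecMul,
      (Matrix.mem_unitaryGroup_iff).mp hA.eigenvectorUnitary.2, vecMul_one]
  have hdiag : ∀ k, Complex.re (star (w k) * ((diagonal (Complex.ofReal ∘ hA.eigenvalues) *ᵥ w) k))
      = hA.eigenvalues k * Complex.normSq (w k) := by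
    intro k
    rw [mulVec_diagonal]
    simp only [Function.comp_apply, Complex.normSq_apply, RCLike.star_def]
    simp [Complex.ext_iff]
    ring
  have h1 : Complex.re (star y ⬝ᵥ (A *ᵥ y)) = ∑ k, hA.eigenvalues k * Complex.normSq (w k) := by
    rw [key, dotProduct, Complex.re_sum]
    exact Finset.sum_congr rfl fun k _ => by simpa using hdiag k
  have h2 : Complex.re (star y ⬝ᵥ y) = ∑ k, Complex.normSq (w k) := by
    rw [← hnorm, dotProduct, Complex.re_sum]
    exact Finset.sum_congr rfl fun k _ => by
      simp [Complex.normSq_apply]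
  rw [h1, h2, Finset.mul_sum]
  exact Finset.sum_le_sum fun k _ => by
    have := Complex.normSq_nonneg (w k)
    nlinarith [hσ k]

-- adjoint trick: eigenvector coefficient vanishes for wrong eigenvalue
lemma eig_coeff_zero {n : Type*} [Fintype n] [DecidableEq n] {A : Matrix n n ℂ}
    (hA : A.IsHermitian) (σ : ℝ) (e : n → ℂ) (he : A *ᵥ e = (σ : ℂ) • e) (k : n)
    (hk : hA.eigenvalues k ≠ σ) : star ⇑(hA.eigenvectorBasis k) ⬝ᵥ e = 0 := by
  set f : n → ℂ := ⇑(hA.eigenvectorBasis k) with hf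
  have h1 : star f ⬝ᵥ (A *ᵥ e) = (hA.eigenvalues k : ℂ) * (star f ⬝ᵥ e) := by
    rw [dotProduct_mulVec]
    have : star f ᵥ* A = (hA.eigenvalues k : ℂ) • star f := by
      have h2 : star (A *ᵥ f) = star f ᵥ* A := by
        rw [star_mulVec, hA.eq]
      rw [← h2, hf, hA.mulVec_eigenvectorBasis]
      funext i
      simp [Complex.real_smul, Pi.smul_apply, mul_comm]
    rw [this, smul_dotProduct, smul_eq_mul]
  have h2 : star f ⬝ᵥ (A *ᵥ e) = (σ : ℂ) * (star f ⬝ᵥ e) := by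
    rw [he, dotProduct_smul, smul_eq_mul]
  have h3 : ((hA.eigenvalues k : ℂ) - (σ : ℂ)) * (star f ⬝ᵥ e) = 0 := by
    rw [sub_mul, h1.symm.trans h2]; ring
  rcases mul_eq_zero.mp h3 with h | h
  · exfalso; apply hk
    have := sub_eq_zero.mp h
    exact_mod_cast this
  · exact h

-- orthonormality in dot product form
lemma eigbasis_dot {n : Type*} [Fintype n] [DecidableEq n] {A : Matrix n n ℂ}
    (hA : A.IsHermitian) (i j : n) :
    star ⇑(hA.eigenvectorBasis i) ⬝ᵥ ⇑(hA.eigenvectorBasis j) = if i = j then 1 else 0 := by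
  rw [dotProduct_comm, ← EuclideanSpace.inner_eq_star_dotProduct]
  rcases eq_or_ne i j with rfl | hij
  · simp [hA.eigenvectorBasis.orthonormal.1 i, inner_self_eq_norm_sq_to_K]
  · simp [hA.eigenvectorBasis.orthonormal.2 hij, hij]

-- expansion in the eigenbasis
lemma eigbasis_expand {n : Type*} [Fintype n] [DecidableEq n] {A : Matrix n n ℂ}
    (hA : A.IsHermitian) (e : n → ℂ) :
    e = ∑ k, (star ⇑(hA.eigenvectorBasis k) ⬝ᵥ e) • ⇑(hA.eigenvectorBasis k) := by
  have h := hA.eigenvectorBasis.sum_repr' ((WithLp.equiv 2 (n → ℂ)).symm e)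
  have h2 : ∀ k, (inner ℂ (hA.eigenvectorBasis k) ((WithLp.equiv 2 (n → ℂ)).symm e) : ℂ)
      = star ⇑(hA.eigenvectorBasis k) ⬝ᵥ e := by
    intro k
    rw [EuclideanSpace.inner_eq_star_dotProduct, dotProduct_comm]
    rfl
  funext x
  have := congrFun (congrArg (WithLp.equiv 2 (n → ℂ)) h) x
  simp only [Equiv.apply_symm_apply] at this
  rw [← this]
  simp only [← h2]
  simp [WithLp.ofLp_sum]

lemma real_smul_fun {α : Type*} (r : ℝ) (f : α → ℂ) : r • f = (r : ℂ) • f := by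
  funext x; simp [Complex.real_smul]

lemma star_sum_elim (g : Fin 2 → ℂ) :
    star (Sum.elim g (0 : Unit → ℂ)) = Sum.elim (star g) (0 : Unit → ℂ) := by
  funext x; cases x <;> simp

lemma block_mulVec (H₁ : Matrix (Fin 2) (Fin 2) ℂ) (v : Fin 2 → ℂ) (h : ℝ) (g : Fin 2 → ℂ) :
    (Matrix.fromBlocks H₁ (Matrix.of fun i (_ : Unit) => v i)
      (Matrix.of fun (_ : Unit) j => star (v j)) (Matrix.of fun (_ : Unit) (_ : Unit) => (h : ℂ)))
      *ᵥ (Sum.elim g 0) = Sum.elim (H₁ *ᵥ g) (fun _ => star v ⬝ᵥ g) := by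
  rw [fromBlocks_mulVec]
  funext m; rcases m with k | ⟨⟩
  · simp
  · simp [mulVec, dotProduct]

/-- Cauchy interlacing-type statement used for 3×3 fault points: if the Hermitian
matrix `H = [[H₁, v], [vᴴ, h]]`, with `H₁` a 2×2 Hermitian matrix having two distinct
eigenvalues, has its smallest eigenvalue `σ` of multiplicity at least 2, then `σ` is
the smallest eigenvalue of `H₁` and every eigenvector of `H₁` for `σ` is orthogonal
to `v`. -/
theorem double_smallest_eigenvalue_bordered_hermitian
    (H₁ : Matrix (Fin 2) (Fin 2) ℂ) (hH₁ : H₁.IsHermitian)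
    (hdist : hH₁.eigenvalues 0 ≠ hH₁.eigenvalues 1)
    (v : Fin 2 → ℂ) (h : ℝ)
    (H : Matrix (Fin 2 ⊕ Unit) (Fin 2 ⊕ Unit) ℂ)
    (hHdef : H = Matrix.fromBlocks H₁ (Matrix.of fun i (_ : Unit) => v i)
      (Matrix.of fun (_ : Unit) j => star (v j)) (Matrix.of fun (_ : Unit) (_ : Unit) => (h : ℂ)))
    (hH : H.IsHermitian) (σ : ℝ)
    (hσmin : σ = ⨅ i, hH.eigenvalues i)
    (hσmult : ∃ i j : Fin 2 ⊕ Unit, i ≠ j ∧ hH.eigenvalues i = σ ∧ hH.eigenvalues j = σ) :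
    σ = (⨅ i, hH₁.eigenvalues i) ∧
    ∀ e : Fin 2 → ℂ, e ≠ 0 → H₁.mulVec e = (σ : ℂ) • e → star v ⬝ᵥ e = 0 := by
  
  obtain ⟨i, j, hij, hi, hj⟩ := hσmult
  have hle : ∀ m, σ ≤ hH.eigenvalues m := by
    intro m
    rw [hσmin]
    exact ciInf_le (Finite.bddBelow_range _) m
  -- the two eigenvectors of H for σ
  set u : (Fin 2 ⊕ Unit) → ℂ := ⇑(hH.eigenvectorBasis i) with hu_def
  set wv : (Fin 2 ⊕ Unit) → ℂ := ⇑(hH.eigenvectorBasis j) with hwv_def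
  have hu : H *ᵥ u = (σ : ℂ) • u := by
    rw [hu_def, hH.mulVec_eigenvectorBasis, hi, real_smul_fun]
  have hwvE : H *ᵥ wv = (σ : ℂ) • wv := by
    rw [hwv_def, hH.mulVec_eigenvectorBasis, hj, real_smul_fun]
  -- a nonzero σ-eigenvector of H with last coordinate zero
  have h1 : star u ⬝ᵥ u = 1 := by simpa using eigbasis_dot hH i i
  have h2 : star wv ⬝ᵥ wv = 1 := by simpa using eigbasis_dot hH j j
  have h3 : star wv ⬝ᵥ u = 0 := by simpa [Ne.symm hij] using eigbasis_dot hH j i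
  have hex : ∃ x : (Fin 2 ⊕ Unit) → ℂ, x ≠ 0 ∧ H *ᵥ x = (σ : ℂ) • x ∧ x (Sum.inr ()) = 0 := by
    by_cases ha : u (Sum.inr ()) = 0
    · refine ⟨u, ?_, hu, ha⟩
      intro h0
      rw [h0] at h1
      simp at h1
    · refine ⟨u (Sum.inr ()) • wv - (wv (Sum.inr ())) • u, ?_, ?_, by simp [mul_comm]⟩
      · intro h0
        have hd : star wv ⬝ᵥ (u (Sum.inr ()) • wv - (wv (Sum.inr ())) • u) = u (Sum.inr ()) := by
          rw [dotProduct_sub, dotProduct_smul, dotProduct_smul, h2, h3]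
          simp
        rw [h0] at hd
        simp at hd
        exact ha hd.symm
      · rw [mulVec_sub, mulVec_smul, mulVec_smul, hu, hwvE]
        rw [smul_sub]
        rw [smul_comm, smul_comm ((σ:ℂ)) (wv (Sum.inr ()))]
  obtain ⟨x, hx0, hxe, hxr⟩ := hex
  set e₀ : Fin 2 → ℂ := fun k => x (Sum.inl k) with he₀_def
  have hxelim : x = Sum.elim e₀ 0 := by
    funext m; rcases m with k | ⟨⟩
    · rfl
    · simpa using hxr
  have hmv : H *ᵥ x = Sum.elim (H₁ *ᵥ e₀) (fun _ => star v ⬝ᵥ e₀) := by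
    rw [hxelim, hHdef, block_mulVec]
  have he₀eig : H₁ *ᵥ e₀ = (σ : ℂ) • e₀ := by
    funext k
    have := congrFun (hmv.symm.trans hxe) (Sum.inl k)
    simpa [hxelim] using this
  have he₀orth : star v ⬝ᵥ e₀ = 0 := by
    have := congrFun (hmv.symm.trans hxe) (Sum.inr ())
    simpa [hxelim] using this
  have he₀ne : e₀ ≠ 0 := by
    intro h0
    apply hx0
    rw [hxelim, h0]
    funext m; rcases m with k | ⟨⟩ <;> simp
  -- σ is below every eigenvalue of H₁
  have hle₁ : ∀ m : Fin 2, σ ≤ hH₁.eigenvalues m := by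
    intro m
    have h1 : star ⇑(hH₁.eigenvectorBasis m) ⬝ᵥ ⇑(hH₁.eigenvectorBasis m) = 1 := by
      simpa using eigbasis_dot hH₁ m m
    have hray := rayleigh_lower hH σ hle (Sum.elim (⇑(hH₁.eigenvectorBasis m)) 0)
    have hyy : star (Sum.elim (⇑(hH₁.eigenvectorBasis m)) (0:Unit → ℂ))
        ⬝ᵥ Sum.elim (⇑(hH₁.eigenvectorBasis m)) 0 = 1 := by
      rw [star_sum_elim, sumElim_dotProduct_sumElim, h1]
      simp
    have hyHy : star (Sum.elim (⇑(hH₁.eigenvectorBasis m)) (0:Unit → ℂ))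
        ⬝ᵥ (H *ᵥ Sum.elim (⇑(hH₁.eigenvectorBasis m)) 0) = (hH₁.eigenvalues m : ℂ) := by
      rw [hHdef, block_mulVec, star_sum_elim, sumElim_dotProduct_sumElim,
        hH₁.mulVec_eigenvectorBasis, real_smul_fun, dotProduct_smul, h1]
      simp
    rw [hyy, hyHy] at hray
    simpa using hray
  -- σ is an eigenvalue of H₁
  have hs : ∃ s : Fin 2, hH₁.eigenvalues s = σ := by
    by_contra hcon
    push_neg at hcon
    apply he₀ne
    have := eigbasis_expand hH₁ e₀
    rw [this]
    refine Finset.sum_eq_zero fun k _ => ?_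
    rw [eig_coeff_zero hH₁ σ e₀ he₀eig k (hcon k)]
    simp
  obtain ⟨s, hs⟩ := hs
  have hne : ∀ k : Fin 2, k ≠ s → hH₁.eigenvalues k ≠ σ := by
    intro k hk
    rw [← hs]
    have hcs : (k = 0 ∧ s = 1) ∨ (k = 1 ∧ s = 0) := by omega
    rcases hcs with ⟨rfl, rfl⟩ | ⟨rfl, rfl⟩
    · exact hdist
    · exact Ne.symm hdist
  -- every σ-eigenvector of H₁ is a multiple of the s-th basis vector
  have hrep : ∀ e : Fin 2 → ℂ, H₁ *ᵥ e = (σ : ℂ) • e →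
      e = (star ⇑(hH₁.eigenvectorBasis s) ⬝ᵥ e) • ⇑(hH₁.eigenvectorBasis s) := by
    intro e he
    have hexp := eigbasis_expand hH₁ e
    rw [Finset.sum_eq_single s (fun b _ hb => by
      rw [eig_coeff_zero hH₁ σ e he b (hne b hb)]; simp)
      (fun hns => absurd (Finset.mem_univ s) hns)] at hexp
    exact hexp
  have hc₀ : (star ⇑(hH₁.eigenvectorBasis s) ⬝ᵥ e₀) ≠ 0 := by
    intro h0
    apply he₀ne
    rw [hrep e₀ he₀eig, h0, zero_smul]
  have hvs : star v ⬝ᵥ ⇑(hH₁.eigenvectorBasis s) = 0 := by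
    have := he₀orth
    rw [hrep e₀ he₀eig, dotProduct_smul, smul_eq_mul] at this
    exact (mul_eq_zero.mp this).resolve_left hc₀
  constructor
  · refine le_antisymm (le_ciInf hle₁) ?_
    calc (⨅ m, hH₁.eigenvalues m) ≤ hH₁.eigenvalues s := ciInf_le (Finite.bddBelow_range _) s
    _ = σ := hs
  · intro e _ he
    rw [hrep e he, dotProduct_smul, hvs, smul_eq_mul, mul_zero]
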